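/- Let I ⊆ R = k[x_1,...,x_{d-1},y] be a zero-dimensional monomial ideal, R̄ = R/⟨y⟩ ≅ k[x_1,...,x_{d-1}], and Ī = (I + ⟨y⟩)/⟨y⟩. Then dim_k(R̄/Ī) ≤ dim_k((I:y)²/(I²:y)). -/

import Mathlib

/-- A monomial ideal: an ideal containing, with any polynomial, each of its monomials. -/
def IsMonomialIdeal {k : Type*} [Field k] {σ : Type*} (I : Ideal (MvPolynomial σ k)) : Prop :=
  ∀ p ∈ I, ∀ m ∈ p.support, (MvPolynomial.monomial m (1 : k)) ∈ I

/-- The `k`-vector space dimension of the quotient `A/B` of an ideal `A` by an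
ideal `B`. -/
noncomputable def idealQuotDim (k : Type*) [Field k] {R : Type*} [CommRing R]
    [Algebra k R] (A B : Ideal R) : ℕ :=
  Module.finrank k
    (↥(A.restrictScalars k) ⧸
      (Submodule.comap (A.restrictScalars k).subtype (B.restrictScalars k)))

open MvPolynomial Pointwise

namespace Stmt16Aux

variable {k : Type*} [Field k] {σ : Type*}

/-- divisibility: membership of a monomial propagates upward. -/
theorem mem_of_le {I : Ideal (MvPolynomial σ k)} {s m : σ →₀ ℕ}
    (hs : monomial s (1:k) ∈ I) (h : s ≤ m) : monomial m (1:k) ∈ I := by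
  have : monomial m (1:k) = monomial (m - s) (1:k) * monomial s 1 := by
    rw [monomial_mul, one_mul, tsub_add_cancel_of_le h]
  rw [this]
  exact Ideal.mul_mem_left _ _ hs

theorem span_monomials {I : Ideal (MvPolynomial σ k)} (hmon : IsMonomialIdeal I) :
    I = Ideal.span ((fun s => monomial s (1:k)) '' {m | monomial m (1:k) ∈ I}) := by
  apply le_antisymm
  · intro f hf
    rw [mem_ideal_span_monomial_image]
    exact fun m hm => ⟨m, hmon f hf m hm, le_rfl⟩
  · rw [Ideal.span_le]
    rintro p ⟨m, hm, rfl⟩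
    exact hm

theorem isMonomialIdeal_span (S : Set (σ →₀ ℕ)) :
    IsMonomialIdeal (Ideal.span ((fun s => monomial s (1:k)) '' S)) := by
  intro p hp m hm
  obtain ⟨s, hs, hsm⟩ := mem_ideal_span_monomial_image.mp hp m hm
  exact mem_of_le (Ideal.subset_span ⟨s, hs, rfl⟩) hsm

theorem mem_monomial_span_iff {S : Set (σ →₀ ℕ)} {m : σ →₀ ℕ} :
    monomial m (1:k) ∈ Ideal.span ((fun s => monomial s (1:k)) '' S) ↔ ∃ s ∈ S, s ≤ m := by
  rw [mem_ideal_span_monomial_image]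
  classical
  constructor
  · intro h
    refine h m ?_
    rw [support_monomial, if_neg (one_ne_zero)]
    exact Finset.mem_singleton_self m
  · intro h m' hm'
    rw [support_monomial, if_neg (one_ne_zero), Finset.mem_singleton] at hm'
    exact hm' ▸ h

theorem sq_span {I : Ideal (MvPolynomial σ k)} (hmon : IsMonomialIdeal I) :
    I ^ 2 = Ideal.span ((fun s => monomial s (1:k)) ''
      ({m | monomial m (1:k) ∈ I} + {m | monomial m (1:k) ∈ I})) := by
  rw [pow_two]
  apply le_antisymm
  · nth_rewrite 1 [span_monomials hmon]; nth_rewrite 2 [span_monomials hmon]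
    rw [Ideal.span_mul_span, Ideal.span_le]
    intro p hp
    simp only [Set.mem_mul] at hp
    obtain ⟨_, ⟨s, hs, rfl⟩, _, ⟨t, ht, rfl⟩, rfl⟩ := hp
    simp only [monomial_mul, one_mul]
    exact Ideal.subset_span ⟨s + t, Set.add_mem_add hs ht, rfl⟩
  · rw [Ideal.span_le]
    rintro p ⟨m, hm, rfl⟩
    obtain ⟨s, hs, t, ht, rfl⟩ := Set.mem_add.mp hm
    have : monomial (s + t) (1:k) = monomial s 1 * monomial t 1 := by
      rw [monomial_mul, one_mul]
    show monomial (s + t) (1:k) ∈ I * I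
    rw [this]
    exact Ideal.mul_mem_mul hs ht

theorem isMonomialIdeal_sq {I : Ideal (MvPolynomial σ k)} (hmon : IsMonomialIdeal I) :
    IsMonomialIdeal (I ^ 2) := by
  rw [sq_span hmon]; exact isMonomialIdeal_span _

theorem mem_sq_iff {I : Ideal (MvPolynomial σ k)} (hmon : IsMonomialIdeal I) {m : σ →₀ ℕ} :
    monomial m (1:k) ∈ I ^ 2 ↔
      ∃ s t, monomial s (1:k) ∈ I ∧ monomial t (1:k) ∈ I ∧ s + t ≤ m := by
  rw [sq_span hmon, mem_monomial_span_iff]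
  constructor
  · rintro ⟨u, hu, hum⟩
    obtain ⟨s, hs, t, ht, rfl⟩ := Set.mem_add.mp hu
    exact ⟨s, t, hs, ht, hum⟩
  · rintro ⟨s, t, hs, ht, h⟩
    exact ⟨s + t, Set.add_mem_add hs ht, h⟩

theorem monomial_mul_X (m : σ →₀ ℕ) (v : σ) :
    monomial m (1:k) * X v = monomial (m + Finsupp.single v 1) 1 := by
  rw [X, monomial_mul, mul_one]

theorem mem_colon_iff {I : Ideal (MvPolynomial σ k)} {m : σ →₀ ℕ} {v : σ} :
    monomial m (1:k) ∈ I.colon ((Ideal.span {X v} : Ideal (MvPolynomial σ k)) : Set (MvPolynomial σ k)) ↔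
      monomial (m + Finsupp.single v 1) (1:k) ∈ I := by
  rw [Ideal.mem_colon_span_singleton, monomial_mul_X]

theorem isMonomialIdeal_colon {I : Ideal (MvPolynomial σ k)} (hmon : IsMonomialIdeal I) (v : σ) :
    IsMonomialIdeal (I.colon ((Ideal.span {X v} : Ideal (MvPolynomial σ k)) : Set (MvPolynomial σ k))) := by
  intro p hp m hm
  rw [Ideal.mem_colon_span_singleton] at hp
  rw [mem_colon_iff]
  refine hmon _ hp _ ?_
  rw [mem_support_iff, coeff_mul_X]
  exact mem_support_iff.mp hm



theorem coeff_finsupp_sum_monomial {ι : Type*} (d : ι → (σ →₀ ℕ)) (hd : Function.Injective d)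
    (l : ι →₀ k) (i : ι) :
    coeff (d i) (l.sum fun j c => monomial (d j) c) = l i := by
  classical
  rw [Finsupp.sum, coeff_sum]
  have : ∀ j ∈ l.support, coeff (d i) (monomial (d j) (l j)) = if j = i then l j else 0 := by
    intro j _
    rw [coeff_monomial]
    by_cases h : j = i
    · simp [h]
    · rw [if_neg h, if_neg (fun hh => h (hd hh))]
  rw [Finset.sum_congr rfl this, Finset.sum_ite_eq' l.support i (fun j => l j)]
  by_cases h : i ∈ l.support
  · rw [if_pos h]
  · rw [if_neg h]
    exact (Finsupp.notMem_support_iff.mp h).symm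

/-- distinct monomials outside a monomial ideal are linearly independent mod it -/
theorem linearIndependent_monomial_quotient {W : Ideal (MvPolynomial σ k)}
    (hW : IsMonomialIdeal W) {ι : Type*} (d : ι → (σ →₀ ℕ)) (hd : Function.Injective d)
    (hnot : ∀ i, monomial (d i) (1:k) ∉ W) :
    LinearIndependent k
      (fun i => (W.restrictScalars k).mkQ (monomial (d i) (1:k))) := by
  rw [linearIndependent_iff]
  intro l hl
  have hl2 : (W.restrictScalars k).mkQ
      (Finsupp.linearCombination k (fun i => monomial (d i) (1:k)) l) = 0 := by
    rw [Finsupp.apply_linearCombination]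
    exact hl
  clear hl
  set p := Finsupp.linearCombination k (fun i => monomial (d i) (1:k)) l with hp
  have hpI : p ∈ W := by
    rwa [Submodule.mkQ_apply, Submodule.Quotient.mk_eq_zero, Submodule.restrictScalars_mem] at hl2
  have hpsum : p = l.sum fun j c => monomial (d j) c := by
    rw [hp, Finsupp.linearCombination_apply]
    congr 1
    ext j c
    rw [smul_monomial, smul_eq_mul, mul_one]
  ext i
  by_contra hne
  have hco : coeff (d i) p = l i := by rw [hpsum]; exact coeff_finsupp_sum_monomial d hd l i
  have : d i ∈ p.support := by
    rw [mem_support_iff, hco]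
    simpa using hne
  exact hnot i (hW p hpI _ this)

/-- boundedness ⇒ finiteness of monomials outside an ideal -/
theorem finite_not_mem [Finite σ] {W : Ideal (MvPolynomial σ k)}
    (h : ∀ v : σ, ∃ N, monomial (Finsupp.single v N) (1:k) ∈ W) :
    {m : σ →₀ ℕ | monomial m (1:k) ∉ W}.Finite := by
  classical
  cases nonempty_fintype σ
  choose N hN using h
  apply Set.Finite.subset (Set.finite_Iic (Finsupp.equivFunOnFinite.symm N))
  intro m hm
  rw [Set.mem_Iic, Finsupp.le_def]
  intro v
  by_contra hv
  push_neg at hv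
  simp only [Finsupp.equivFunOnFinite_symm_apply_apply] at hv
  exact hm (mem_of_le (hN v) (Finsupp.single_le_iff.mpr hv.le))

theorem exists_pow_mem {I : Ideal (MvPolynomial σ k)} (hmon : IsMonomialIdeal I)
    (hfd : FiniteDimensional k (MvPolynomial σ k ⧸ I)) (v : σ) :
    ∃ N, monomial (Finsupp.single v N) (1:k) ∈ I := by
  classical
  have hni : ¬ LinearIndependent k
      (fun j : ℕ => (Ideal.Quotient.mkₐ k I) (monomial (Finsupp.single v j) (1:k))) := by
    intro h
    exact absurd h.lt_aleph0_of_finite (by simp)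
  rw [linearIndependent_iff] at hni
  push_neg at hni
  obtain ⟨l, hl0, hlne⟩ := hni
  have : Finsupp.linearCombination k (fun j : ℕ => monomial (Finsupp.single v j) (1:k)) l ∈ I := by
    have h2 : (Ideal.Quotient.mkₐ k I).toLinearMap
        (Finsupp.linearCombination k (fun j : ℕ => monomial (Finsupp.single v j) (1:k)) l) = 0 := by
      rw [Finsupp.apply_linearCombination]
      exact hl0
    rwa [AlgHom.toLinearMap_apply, Ideal.Quotient.mkₐ_eq_mk,
      Ideal.Quotient.eq_zero_iff_mem] at h2
  set p := Finsupp.linearCombination k (fun j : ℕ => monomial (Finsupp.single v j) (1:k)) l with hp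
  obtain ⟨j, hj⟩ := Finsupp.ne_iff.mp hlne
  simp only [Finsupp.coe_zero, Pi.zero_apply] at hj
  refine ⟨j, hmon p this _ ?_⟩
  have hpsum : p = l.sum fun j c => monomial (Finsupp.single v j) c := by
    rw [hp, Finsupp.linearCombination_apply]
    congr 1
    ext j c
    rw [smul_monomial, smul_eq_mul, mul_one]
  have hco : coeff (Finsupp.single v j) p = l j := by
    rw [hpsum]
    exact coeff_finsupp_sum_monomial _ (Finsupp.single_injective v) l j
  rw [mem_support_iff, hco]
  exact hj

theorem restrictScalars_span_monomials {W : Ideal (MvPolynomial σ k)} (hW : IsMonomialIdeal W) :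
    W.restrictScalars k = Submodule.span k
      ((fun m => monomial m (1:k)) '' {m | monomial m (1:k) ∈ W}) := by
  apply le_antisymm
  · intro f hf
    rw [Submodule.restrictScalars_mem] at hf
    have hrepr : f = ∑ m ∈ f.support, coeff m f • monomial m (1:k) := by
      conv_lhs => rw [← support_sum_monomial_coeff f]
      apply Finset.sum_congr rfl
      intro m _
      rw [smul_monomial, smul_eq_mul, mul_one]
    rw [hrepr]
    apply Submodule.sum_mem
    intro m hm
    exact Submodule.smul_mem _ _ (Submodule.subset_span ⟨m, hW f hf m hm, rfl⟩)
  · rw [Submodule.span_le]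
    rintro p ⟨m, hm, rfl⟩
    simpa using hm


section Hat
variable {τ : Type*}


noncomputable def pr : MvPolynomial (τ ⊕ Unit) k →ₐ[k] MvPolynomial τ k :=
  aeval (Sum.elim X (fun _ => 0))

noncomputable def hat (ν : τ →₀ ℕ) : (τ ⊕ Unit) →₀ ℕ := Finsupp.mapDomain Sum.inl ν

theorem hat_apply_inl (ν : τ →₀ ℕ) (i : τ) : hat ν (Sum.inl i) = ν i :=
  Finsupp.mapDomain_apply Sum.inl_injective ν i

theorem hat_apply_inr (ν : τ →₀ ℕ) : hat ν (Sum.inr ()) = 0 :=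
  Finsupp.mapDomain_notin_range ν (Sum.inr ()) (by simp)

theorem hat_injective : Function.Injective (hat (τ := τ)) :=
  Finsupp.mapDomain_injective Sum.inl_injective

theorem exists_hat {m : (τ ⊕ Unit) →₀ ℕ} (h : m (Sum.inr ()) = 0) : ∃ ν, m = hat ν := by
  classical
  refine ⟨Finsupp.comapDomain Sum.inl m Sum.inl_injective.injOn, ?_⟩
  ext v
  cases v with
  | inl i => rw [hat_apply_inl, Finsupp.comapDomain_apply]
  | inr u => cases u; rw [hat_apply_inr, h]

theorem pr_monomial_hat (ν : τ →₀ ℕ) (c : k) : pr (monomial (hat ν) c) = monomial ν c := by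
  rw [pr, aeval_monomial, hat, Finsupp.prod_mapDomain_index_inj Sum.inl_injective]
  simp only [Sum.elim_inl]
  rw [monomial_eq, algebraMap_eq]

theorem pr_monomial_y {m : (τ ⊕ Unit) →₀ ℕ} (h : m (Sum.inr ()) ≠ 0) (c : k) :
    pr (monomial m c) = 0 := by
  rw [pr, aeval_monomial]
  have : m.prod (fun v e => (Sum.elim X (fun _ => 0) v : MvPolynomial τ k) ^ e) = 0 := by
    apply Finset.prod_eq_zero (Finsupp.mem_support_iff.mpr h)
    simp only [Sum.elim_inr]
    exact zero_pow h
  rw [this, mul_zero]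

theorem coeff_pr (f : MvPolynomial (τ ⊕ Unit) k) (ν : τ →₀ ℕ) :
    coeff ν (pr f) = coeff (hat ν) f := by
  classical
  conv_lhs => rw [← support_sum_monomial_coeff f]
  rw [map_sum, coeff_sum]
  have h1 : ∀ m ∈ f.support, coeff ν (pr (monomial m (coeff m f)))
      = if m = hat ν then coeff m f else 0 := by
    intro m _
    by_cases hy : m (Sum.inr ()) = 0
    · obtain ⟨μ, rfl⟩ := exists_hat hy
      rw [pr_monomial_hat, coeff_monomial]
      by_cases hμ : μ = ν
      · subst hμ; rw [if_pos rfl, if_pos rfl]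
      · rw [if_neg (fun h => hμ (hat_injective h)), if_neg hμ]
    · rw [pr_monomial_y hy, if_neg, coeff_zero]
      intro h
      exact hy (h ▸ hat_apply_inr ν)
  rw [Finset.sum_congr rfl h1, Finset.sum_ite_eq' f.support (hat ν) (fun m => coeff m f)]
  by_cases h : hat ν ∈ f.support
  · rw [if_pos h]
  · rw [if_neg h]
    exact (MvPolynomial.notMem_support_iff.mp h).symm

theorem pr_surjective : Function.Surjective (pr (k := k) (τ := τ)) := by
  intro g
  refine ⟨rename Sum.inl g, ?_⟩
  rw [pr, aeval_rename]
  have : (Sum.elim X (fun _ => (0:MvPolynomial τ k)) ∘ (Sum.inl : τ → τ ⊕ Unit)) = X := by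
    funext i; simp
  rw [this, aeval_X_left_apply]


end Hat

end Stmt16Aux


open Stmt16Aux in
set_option maxHeartbeats 1000000 in
/-- for a zero-dimensional monomial ideal
`I ⊆ R = k[x_1,…,x_{d-1},y]` (variables indexed by `Fin n ⊕ Unit`, with `y` the
last variable), setting `R̄ = R/⟨y⟩ ≅ k[x_1,…,x_{d-1}]` and `Ī = (I+⟨y⟩)/⟨y⟩`,
one has `dim_k(R̄/Ī) ≤ dim_k((I:y)²/(I²:y))`. -/
theorem stmt16 (k : Type*) [Field k] {n : ℕ}
    (I : Ideal (MvPolynomial (Fin n ⊕ Unit) k))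
    (hmon : IsMonomialIdeal I) (hproper : I ≠ ⊤)
    (hfd : FiniteDimensional k (MvPolynomial (Fin n ⊕ Unit) k ⧸ I)) :
    Module.finrank k
      (MvPolynomial (Fin n) k ⧸
        I.map (MvPolynomial.aeval
          (Sum.elim MvPolynomial.X (fun _ => 0) :
            Fin n ⊕ Unit → MvPolynomial (Fin n) k)).toRingHom) ≤
    idealQuotDim k
      ((I.colon ((Ideal.span {MvPolynomial.X (Sum.inr ())} : Ideal (MvPolynomial (Fin n ⊕ Unit) k)) :
        Set (MvPolynomial (Fin n ⊕ Unit) k))) ^ 2)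
      ((I ^ 2).colon ((Ideal.span {MvPolynomial.X (Sum.inr ())} : Ideal (MvPolynomial (Fin n ⊕ Unit) k)) :
        Set (MvPolynomial (Fin n ⊕ Unit) k))) := by
  classical
  set Ibar : Ideal (MvPolynomial (Fin n) k) :=
    I.map (MvPolynomial.aeval
      (Sum.elim MvPolynomial.X (fun _ => 0) :
        Fin n ⊕ Unit → MvPolynomial (Fin n) k)).toRingHom with hIbar
  set J : Ideal (MvPolynomial (Fin n ⊕ Unit) k) := I.colon ((Ideal.span {X (Sum.inr ())} : Ideal (MvPolynomial (Fin n ⊕ Unit) k)) : Set (MvPolynomial (Fin n ⊕ Unit) k)) with hJ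
  set K : Ideal (MvPolynomial (Fin n ⊕ Unit) k) := (I ^ 2).colon ((Ideal.span {X (Sum.inr ())} : Ideal (MvPolynomial (Fin n ⊕ Unit) k)) : Set (MvPolynomial (Fin n ⊕ Unit) k)) with hK
  have hmonI2 : IsMonomialIdeal (I ^ 2) := isMonomialIdeal_sq hmon
  have hmonJ : IsMonomialIdeal J := isMonomialIdeal_colon hmon (Sum.inr ())
  have hmonK : IsMonomialIdeal K := isMonomialIdeal_colon hmonI2 (Sum.inr ())
  have hmonJ2 : IsMonomialIdeal (J ^ 2) := isMonomialIdeal_sq hmonJ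
  choose N hN using fun v => exists_pow_mem hmon hfd v
  have hI2K : I ^ 2 ≤ K := fun f hf =>
    Ideal.mem_colon_span_singleton.mpr (Ideal.mul_mem_right _ _ hf)
  have hNK : ∀ v, monomial (Finsupp.single v (2 * N v)) (1:k) ∈ K := by
    intro v
    apply hI2K
    refine (mem_sq_iff hmon).mpr ⟨Finsupp.single v (N v), Finsupp.single v (N v),
      hN v, hN v, ?_⟩
    rw [← Finsupp.single_add, two_mul]
  -- the set V of x-monomials outside I
  set V : Set (Fin n →₀ ℕ) := {ν | monomial (hat ν) (1:k) ∉ I} with hV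
  have hVfin : V.Finite :=
    Set.Finite.preimage hat_injective.injOn (finite_not_mem (fun v => ⟨N v, hN v⟩))
  haveI : Fintype V := hVfin.fintype
  -- membership in Ibar
  have hIbar2 : Ibar = I.map (pr (k := k) (τ := Fin n)).toRingHom := rfl
  have hprsurj : Function.Surjective (pr (k := k) (τ := Fin n)).toRingHom :=
    pr_surjective
  have hmemIbar : ∀ ν : Fin n →₀ ℕ, monomial ν (1:k) ∈ Ibar ↔ monomial (hat ν) (1:k) ∈ I := by
    intro ν
    constructor
    · intro h
      rw [hIbar2, Ideal.mem_map_iff_of_surjective _ hprsurj] at h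
      obtain ⟨f, hf, hpf⟩ := h
      apply hmon f hf
      rw [mem_support_iff, ← coeff_pr]
      rw [show pr f = monomial ν (1:k) from hpf, coeff_monomial, if_pos rfl]
      exact one_ne_zero
    · intro h
      have h2 := Ideal.mem_map_of_mem (pr (k := k) (τ := Fin n)).toRingHom h
      rw [show (pr (k := k) (τ := Fin n)).toRingHom (monomial (hat ν) (1:k))
          = monomial ν (1:k) from pr_monomial_hat ν 1] at h2
      exact hIbar2 ▸ h2
  -- STEP 1 : LHS ≤ card V
  have step1 : Module.finrank k (MvPolynomial (Fin n) k ⧸ Ibar) ≤ Fintype.card V := by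
    set Q := MvPolynomial (Fin n) k ⧸ Ibar
    let φ : MvPolynomial (Fin n) k →ₗ[k] Q := (Ideal.Quotient.mkₐ k Ibar).toLinearMap
    set s : Finset Q := hVfin.toFinset.image (fun ν => φ (monomial ν (1:k))) with hs
    have hspan : Submodule.span k (↑s : Set Q) = ⊤ := by
      rw [Submodule.eq_top_iff']
      intro x
      obtain ⟨f, rfl⟩ := Ideal.Quotient.mkₐ_surjective k Ibar x
      have hf : (Ideal.Quotient.mkₐ k Ibar) f
          = ∑ ν ∈ f.support, coeff ν f • φ (monomial ν (1:k)) := by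
        conv_lhs => rw [← support_sum_monomial_coeff f]
        rw [map_sum]
        apply Finset.sum_congr rfl
        intro ν _
        rw [show monomial ν (coeff ν f) = coeff ν f • monomial ν (1:k) by
          rw [smul_monomial, smul_eq_mul, mul_one]]
        rw [map_smul]
        rfl
      rw [hf]
      apply Submodule.sum_mem
      intro ν _
      by_cases hν : ν ∈ V
      · exact Submodule.smul_mem _ _ (Submodule.subset_span
          (Finset.mem_coe.mpr (Finset.mem_image.mpr ⟨ν, hVfin.mem_toFinset.mpr hν, rfl⟩)))
      · have hmem : monomial ν (1:k) ∈ Ibar := by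
          rw [hV, Set.mem_setOf_eq, not_not] at hν
          exact (hmemIbar ν).mpr hν
        have hz : φ (monomial ν (1:k)) = 0 := by
          show (Ideal.Quotient.mkₐ k Ibar) (monomial ν (1:k)) = 0
          rw [Ideal.Quotient.mkₐ_eq_mk, Ideal.Quotient.eq_zero_iff_mem]
          exact hmem
        rw [hz, smul_zero]
        exact Submodule.zero_mem _
    calc Module.finrank k Q = Module.finrank k (⊤ : Submodule k Q) := (finrank_top k Q).symm
      _ = Module.finrank k (Submodule.span k (↑s : Set Q)) := by rw [hspan]
      _ ≤ s.card := finrank_span_finset_le_card s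
      _ ≤ hVfin.toFinset.card := Finset.card_image_le
      _ = Fintype.card V := hVfin.card_toFinset
  -- STEP 2 : card V ≤ RHS
  have step2 : Fintype.card V ≤ Module.finrank k
      (↥((J ^ 2).restrictScalars k) ⧸
        (Submodule.comap ((J ^ 2).restrictScalars k).subtype (K.restrictScalars k))) := by
    have hsinl : ∀ (c : ℕ) (i : Fin n),
        Finsupp.single (Sum.inr () : Fin n ⊕ Unit) c (Sum.inl i) = 0 :=
      fun c i => Finsupp.single_eq_of_ne (by simp)
    have hβex : ∀ ν : Fin n →₀ ℕ, ∃ c : ℕ,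
        monomial (hat ν + Finsupp.single (Sum.inr () : Fin n ⊕ Unit) c) (1:k) ∈ I ^ 2 := by
      intro ν
      refine ⟨2 * N (Sum.inr ()), (mem_sq_iff hmon).mpr
        ⟨Finsupp.single (Sum.inr ()) (N (Sum.inr ())),
         Finsupp.single (Sum.inr ()) (N (Sum.inr ())), hN _, hN _, ?_⟩⟩
      rw [← Finsupp.single_add, two_mul]
      exact le_add_self
    have hkey : ∀ ν, ν ∈ V → 2 ≤ Nat.find (hβex ν) ∧
        monomial (hat ν + Finsupp.single (Sum.inr ()) (Nat.find (hβex ν) - 2)) (1:k) ∈ J ^ 2 := by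
      intro ν hν
      obtain ⟨s, t, hsI, htI, hst⟩ := (mem_sq_iff hmon).mp (Nat.find_spec (hβex ν))
      have hpt := Finsupp.le_def.mp hst
      have hxle : ∀ i : Fin n, s (Sum.inl i) + t (Sum.inl i) ≤ ν i := by
        intro i
        have h := hpt (Sum.inl i)
        rwa [Finsupp.add_apply, Finsupp.add_apply, hat_apply_inl, hsinl, add_zero] at h
      have hyle : s (Sum.inr ()) + t (Sum.inr ()) ≤ Nat.find (hβex ν) := by
        have h := hpt (Sum.inr ())
        rwa [Finsupp.add_apply, Finsupp.add_apply, hat_apply_inr,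
          Finsupp.single_eq_same, zero_add] at h
      have hsy : 1 ≤ s (Sum.inr ()) := by
        by_contra hc
        push_neg at hc
        apply hν
        refine mem_of_le hsI (Finsupp.le_def.mpr fun a => ?_)
        cases a with
        | inl i => rw [hat_apply_inl]; have := hxle i; omega
        | inr u =>
          show s (Sum.inr ()) ≤ (hat ν) (Sum.inr ())
          rw [hat_apply_inr]; omega
      have hty : 1 ≤ t (Sum.inr ()) := by
        by_contra hc
        push_neg at hc
        apply hν
        refine mem_of_le htI (Finsupp.le_def.mpr fun a => ?_)
        cases a with
        | inl i => rw [hat_apply_inl]; have := hxle i; omega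
        | inr u =>
          show t (Sum.inr ()) ≤ (hat ν) (Sum.inr ())
          rw [hat_apply_inr]; omega
      have hβ2 : 2 ≤ Nat.find (hβex ν) := by omega
      refine ⟨hβ2, (mem_sq_iff hmonJ).mpr
        ⟨s - Finsupp.single (Sum.inr ()) 1, t - Finsupp.single (Sum.inr ()) 1, ?_, ?_, ?_⟩⟩
      · rw [hJ, mem_colon_iff, tsub_add_cancel_of_le (Finsupp.single_le_iff.mpr hsy)]
        exact hsI
      · rw [hJ, mem_colon_iff, tsub_add_cancel_of_le (Finsupp.single_le_iff.mpr hty)]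
        exact htI
      · refine Finsupp.le_def.mpr fun a => ?_
        cases a with
        | inl i =>
          show _ ≤ ((hat ν + Finsupp.single (Sum.inr ()) (Nat.find (hβex ν) - 2) :
            (Fin n ⊕ Unit) →₀ ℕ)) (Sum.inl i)
          rw [Finsupp.add_apply, Finsupp.add_apply, Finsupp.tsub_apply, Finsupp.tsub_apply,
            hat_apply_inl, hsinl, hsinl]
          have := hxle i
          omega
        | inr u =>
          show ((s - Finsupp.single (Sum.inr ()) 1 + (t - Finsupp.single (Sum.inr ()) 1) :
              (Fin n ⊕ Unit) →₀ ℕ)) (Sum.inr ()) ≤ ((hat ν + Finsupp.single (Sum.inr ())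
              (Nat.find (hβex ν) - 2) : (Fin n ⊕ Unit) →₀ ℕ)) (Sum.inr ())
          rw [Finsupp.add_apply, Finsupp.add_apply, Finsupp.tsub_apply, Finsupp.tsub_apply,
            hat_apply_inr, Finsupp.single_eq_same, Finsupp.single_eq_same]
          omega
    have hnotK : ∀ ν, ν ∈ V →
        monomial (hat ν + Finsupp.single (Sum.inr ()) (Nat.find (hβex ν) - 2)) (1:k) ∉ K := by
      intro ν hν hcon
      have hβ2 := (hkey ν hν).1
      rw [hK, mem_colon_iff, add_assoc, ← Finsupp.single_add] at hcon
      have heq : Nat.find (hβex ν) - 2 + 1 = Nat.find (hβex ν) - 1 := by omega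
      rw [heq] at hcon
      exact Nat.find_min (hβex ν) (by omega) hcon
    set A' : Submodule k (MvPolynomial (Fin n ⊕ Unit) k) := (J ^ 2).restrictScalars k with hA'def
    set K' : Submodule k (MvPolynomial (Fin n ⊕ Unit) k) := K.restrictScalars k with hK'def
    let ψ : A' →ₗ[k] ((MvPolynomial (Fin n ⊕ Unit) k) ⧸ K') := K'.mkQ.comp A'.subtype
    have hker : LinearMap.ker ψ = Submodule.comap A'.subtype K' := by
      rw [LinearMap.ker_comp, Submodule.ker_mkQ]
    have e1 : (↥A' ⧸ Submodule.comap A'.subtype K') ≃ₗ[k] ↥(LinearMap.range ψ) :=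
      (Submodule.quotEquivOfEq _ _ hker.symm).trans ψ.quotKerEquivRange
    have hTfin : {m : (Fin n ⊕ Unit) →₀ ℕ | monomial m (1:k) ∉ K}.Finite :=
      finite_not_mem (fun v => ⟨2 * N v, hNK v⟩)
    have hrange : LinearMap.range ψ = Submodule.map K'.mkQ A' := by
      rw [LinearMap.range_comp, Submodule.range_subtype]
    set T : Set ((Fin n ⊕ Unit) →₀ ℕ) :=
      {m | monomial m (1:k) ∈ J ^ 2 ∧ monomial m (1:k) ∉ K} with hT
    have hmap : Submodule.map K'.mkQ A' =
        Submodule.span k (K'.mkQ '' ((fun m => monomial m (1:k)) '' T)) := by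
      rw [hA'def, restrictScalars_span_monomials hmonJ2, Submodule.map_span]
      apply le_antisymm
      · rw [Submodule.span_le]
        rintro q ⟨p, ⟨m, hm, rfl⟩, rfl⟩
        by_cases hmK : monomial m (1:k) ∈ K
        · have hz : K'.mkQ (monomial m (1:k)) = 0 := by
            rw [Submodule.mkQ_apply, Submodule.Quotient.mk_eq_zero]
            simpa [hK'def] using hmK
          rw [hz]
          exact Submodule.zero_mem _
        · exact Submodule.subset_span ⟨_, ⟨m, ⟨hm, hmK⟩, rfl⟩, rfl⟩
      · exact Submodule.span_mono
          (Set.image_mono (Set.image_mono (fun m hm => hm.1)))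
    have hTsub : T.Finite := hTfin.subset (fun m hm => hm.2)
    have hfinr : Module.Finite k ↥(LinearMap.range ψ) := by
      rw [hrange, hmap]
      exact FiniteDimensional.span_of_finite k ((hTsub.image _).image _)
    let d : V → ((Fin n ⊕ Unit) →₀ ℕ) := fun ν =>
      hat ν.1 + Finsupp.single (Sum.inr ()) (Nat.find (hβex ν.1) - 2)
    have hdinj : Function.Injective d := by
      intro ν₁ ν₂ h
      apply Subtype.ext
      ext a
      have h1 := congrArg (fun m : (Fin n ⊕ Unit) →₀ ℕ => m (Sum.inl a)) h
      simp only [d, Finsupp.add_apply, hsinl, add_zero] at h1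
      rw [hat_apply_inl, hat_apply_inl] at h1
      exact h1
    have hli : LinearIndependent k (fun i : V => K'.mkQ (monomial (d i) (1:k))) :=
      linearIndependent_monomial_quotient hmonK d hdinj (fun i => hnotK i.1 i.2)
    let F : V → ↥(LinearMap.range ψ) := fun i =>
      ⟨K'.mkQ (monomial (d i) (1:k)),
        ⟨⟨monomial (d i) (1:k), (hkey i.1 i.2).2⟩, rfl⟩⟩
    have hliF : LinearIndependent k F :=
      LinearIndependent.of_comp (LinearMap.range ψ).subtype hli
    calc Fintype.card V ≤ Module.finrank k ↥(LinearMap.range ψ) :=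
          hliF.fintype_card_le_finrank
      _ = _ := e1.finrank_eq.symm
  unfold idealQuotDim
  exact le_trans step1 step2
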